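/- Let Γ be a finite Büchi game, v a position, and S an absorption-dominant winning strategy of Player 0 from v. If a position w ∈ V₀ occurs infinitely often in the strategy tree S, then S plays positionally from w: all occurrences of w in S have the same chosen successor. -/

import Mathlib

/-- A Büchi game: positions `V` partitioned into Player 0's positions `V0` and
Player 1's positions `V1`, edge relation `E` with every position having a
successor, and target set `F`. -/
structure BuchiGame (V : Type*) where
  V0 : Set V
  V1 : Set V
  E : V → V → Prop
  F : Set V
  cover : ∀ v, v ∈ V0 ∨ v ∈ V1
  disjoint : ∀ v, ¬(v ∈ V0 ∧ v ∈ V1)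
  nonempty_succ : ∀ v, ∃ w, E v w

/-- A strategy of Player 0 from `v0`, represented as a subtree of the tree
unraveling of the game: a set of finite paths from `v0` which is prefix-closed,
has a unique chosen successor at nodes ending in Player 0 positions, and all
successors at nodes ending in Player 1 positions. -/
structure BuchiStrategy {V : Type*} (G : BuchiGame V) (v0 : V) where
  tree : Set (List V)
  root_mem : [v0] ∈ tree
  isPath : ∀ ρ ∈ tree, ρ.head? = some v0 ∧ List.Chain' G.E ρ
  prefix_closed : ∀ (ρ : List V) (v : V), ρ ≠ [] → ρ ++ [v] ∈ tree → ρ ∈ tree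
  choice0 : ∀ (ρ : List V) (v : V), ρ ++ [v] ∈ tree → v ∈ G.V0 →
    ∃! w : V, ρ ++ [v, w] ∈ tree
  choice1 : ∀ (ρ : List V) (v : V), ρ ++ [v] ∈ tree → v ∈ G.V1 →
    ∀ w : V, G.E v w → ρ ++ [v, w] ∈ tree

namespace BuchiStrategy

variable {V : Type*} {G : BuchiGame V} {v0 : V}

/-- The number of occurrences (in `ℕ∞`) of the edge `e` in the strategy tree. -/
noncomputable def edgeCount (S : BuchiStrategy G v0) (e : V × V) : ℕ∞ :=
  {ρ : List V | ρ ++ [e.1, e.2] ∈ S.tree}.encard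

/-- `S₁` absorbs `S₂`: every edge occurs in `S₁` at most as often as in `S₂`. -/
def Absorbs (S₁ S₂ : BuchiStrategy G v0) : Prop :=
  ∀ e : V × V, S₁.edgeCount e ≤ S₂.edgeCount e

/-- `S₁` strictly absorbs `S₂`. -/
def StrictlyAbsorbs (S₁ S₂ : BuchiStrategy G v0) : Prop :=
  Absorbs S₁ S₂ ∧ ∃ e : V × V, S₁.edgeCount e < S₂.edgeCount e

/-- A strategy is absorption-dominant from `v0` if no strategy strictly absorbs it. -/
def AbsorptionDominant (S : BuchiStrategy G v0) : Prop :=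
  ∀ S' : BuchiStrategy G v0, ¬ StrictlyAbsorbs S' S

/-- A strategy is positional if all occurrences of any Player 0 position have
the same chosen successor. -/
def Positional (S : BuchiStrategy G v0) : Prop :=
  ∀ v ∈ G.V0, ∀ (ρ ρ' : List V) (w w' : V),
    ρ ++ [v, w] ∈ S.tree → ρ' ++ [v, w'] ∈ S.tree → w = w'

/-- An infinite play consistent with the strategy: all finite prefixes lie in
the strategy tree. -/
def ConsistentPlay (S : BuchiStrategy G v0) (f : ℕ → V) : Prop :=
  ∀ n : ℕ, (List.range (n + 1)).map f ∈ S.tree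

/-- A strategy is winning if every consistent play visits `F` infinitely often. -/
def Winning (S : BuchiStrategy G v0) : Prop :=
  ∀ f : ℕ → V, S.ConsistentPlay f → ∀ n : ℕ, ∃ m : ℕ, n ≤ m ∧ f m ∈ G.F

end BuchiStrategy

section AbsDomAux

open BuchiStrategy

variable {V : Type*} {G : BuchiGame V} {v0 : V}

/-- Helper: `l ++ [p, q] = (l ++ [p]) ++ [q]`. -/
private lemma app2 (l : List V) (p q : V) : l ++ [p, q] = (l ++ [p]) ++ [q] :=
  (List.append_assoc l [p] [q]).symm

/-- Uniqueness of the decomposition at the last occurrence of `w` before the end. -/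
private lemma decomp_unique {w : V} {α₁ : List V} :
    ∀ {α₂ β₁ β₂ : List V}, α₁ ++ [w] ++ β₁ = α₂ ++ [w] ++ β₂ →
      w ∉ β₁.dropLast → w ∉ β₂.dropLast → β₁ ≠ [] → β₂ ≠ [] → α₁ = α₂ ∧ β₁ = β₂ := by
  induction α₁ with
  | nil =>
    intro α₂ β₁ β₂ h h1 h2 hb1 hb2
    cases α₂ with
    | nil =>
      simp only [List.nil_append, List.cons_append] at h
      exact ⟨rfl, by injection h⟩
    | cons a α₂ =>
      exfalso
      simp only [List.nil_append, List.cons_append, List.append_assoc] at h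
      injection h with hw hβ
      apply h1
      rw [hβ, ← List.singleton_append, ← List.append_assoc,
        List.dropLast_append_of_ne_nil hb2]
      simp
  | cons a α₁ ih =>
    intro α₂ β₁ β₂ h h1 h2 hb1 hb2
    cases α₂ with
    | nil =>
      exfalso
      simp only [List.nil_append, List.cons_append, List.append_assoc] at h
      injection h with hw hβ
      apply h2
      rw [← hβ, ← List.singleton_append, ← List.append_assoc,
        List.dropLast_append_of_ne_nil hb1]
      simp
    | cons b α₂ =>
      simp only [List.cons_append] at h
      injection h with hab h'
      obtain ⟨h₁, h₂⟩ := ih h' h1 h2 hb1 hb2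
      exact ⟨by rw [hab, h₁], h₂⟩

/-- The uniformized tree: behave like `S` until the first occurrence of `w`, and at
every occurrence of `w` (re)start playing like the subtree of `S` at `ρ₂ ++ [w]`. -/
inductive UT (S : BuchiStrategy G v0) (w : V) (ρ₂ : List V) : List V → Prop
  | nw (μ : List V) : μ ∈ S.tree → w ∉ μ.dropLast → UT S w ρ₂ μ
  | ext (α β : List V) : UT S w ρ₂ (α ++ [w]) → β ≠ [] → w ∉ β.dropLast →
      ρ₂ ++ [w] ++ β ∈ S.tree → UT S w ρ₂ (α ++ [w] ++ β)

private lemma UT_cases {S : BuchiStrategy G v0} {w : V} {ρ₂ : List V} {μ : List V}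
    (h : UT S w ρ₂ μ) :
    (μ ∈ S.tree ∧ w ∉ μ.dropLast) ∨
      ∃ α β, μ = α ++ [w] ++ β ∧ β ≠ [] ∧ w ∉ β.dropLast ∧ UT S w ρ₂ (α ++ [w]) ∧
        ρ₂ ++ [w] ++ β ∈ S.tree := by
  cases h with
  | nw _ h1 h2 => exact Or.inl ⟨h1, h2⟩
  | ext α β h1 h2 h3 h4 => exact Or.inr ⟨α, β, rfl, h2, h3, h1, h4⟩

/-- Children correspondence: every node of the uniformized tree has a shadow node in
`S.tree` ending in the same position, with the same children. -/
private lemma UT_children (S : BuchiStrategy G v0) {w : V} {ρ₂ : List V}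
    (hmem : ρ₂ ++ [w] ∈ S.tree) {ρ : List V} {x : V} (h : UT S w ρ₂ (ρ ++ [x])) :
    ∃ τ, τ ++ [x] ∈ S.tree ∧ ∀ y, (UT S w ρ₂ (ρ ++ [x, y]) ↔ τ ++ [x, y] ∈ S.tree) := by
  by_cases hxw : x = w
  · subst hxw
    refine ⟨ρ₂, hmem, fun y => ⟨?_, ?_⟩⟩
    · intro hUT
      rcases UT_cases hUT with ⟨_, hno⟩ | ⟨α, β, heq, hβ, hwβ, _, hσβ⟩
      · exfalso; apply hno; rw [app2, List.dropLast_concat]; simp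
      · rw [app2] at heq
        obtain ⟨hα, hβeq⟩ := decomp_unique heq (by simp) hwβ (by simp) hβ
        rw [app2]
        rw [← hβeq] at hσβ
        exact hσβ
    · intro hS
      have := UT.ext (S := S) ρ [y] h (by simp) (by simp) (by rw [← app2]; exact hS)
      rw [← app2] at this
      exact this
  · rcases UT_cases h with ⟨hS, hno⟩ | ⟨α, β, heq, hβ, hwβ, hUTα, hσβ⟩
    · -- no `w` in the interior: shadow is the node itself
      have hnoρ : w ∉ ρ ++ [x] := by
        rw [List.dropLast_concat] at hno
        intro hc
        rcases List.mem_append.mp hc with hc | hc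
        · exact hno hc
        · exact hxw (List.mem_singleton.mp hc).symm
      refine ⟨ρ, hS, fun y => ⟨?_, ?_⟩⟩
      · intro hUT
        rcases UT_cases hUT with ⟨h', _⟩ | ⟨α, β, heq, hβ, hwβ, _, _⟩
        · exact h'
        · exfalso
          apply hnoρ
          have : w ∈ (ρ ++ [x, y]).dropLast := by
            rw [heq, List.dropLast_append_of_ne_nil hβ]
            simp
          rw [app2, List.dropLast_concat] at this
          exact this
      · intro hS'
        exact UT.nw _ hS' (by rw [app2, List.dropLast_concat]; exact hnoρ)
    · -- inside a copied subtree
      obtain ⟨δ, rfl⟩ : ∃ δ, β = δ ++ [x] := by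
        apply List.getLast?_eq_some_iff.mp
        have h1 : (ρ ++ [x]).getLast? = some x := List.getLast?_concat
        rw [heq, List.getLast?_append_of_ne_nil _ hβ] at h1
        exact h1
      have hρeq : ρ = α ++ [w] ++ δ := by
        rw [← List.append_assoc] at heq
        exact (List.append_inj' heq rfl).1
      have hwδ : w ∉ δ ++ [x] := by
        rw [List.dropLast_concat] at hwβ
        intro hc
        rcases List.mem_append.mp hc with hc | hc
        · exact hwβ hc
        · exact hxw (List.mem_singleton.mp hc).symm
      refine ⟨ρ₂ ++ [w] ++ δ,
        by simp only [← List.append_assoc] at hσβ ⊢; exact hσβ, fun y => ⟨?_, ?_⟩⟩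
      · intro hUT
        rcases UT_cases hUT with ⟨_, hno⟩ | ⟨α', β', heq', hβ', hwβ', _, hσβ'⟩
        · exfalso
          apply hno
          rw [app2, List.dropLast_concat, hρeq]
          simp
        · have hcan : ρ ++ [x, y] = α ++ [w] ++ ((δ ++ [x]) ++ [y]) := by
            simp only [app2, heq, ← List.append_assoc]
          rw [hcan] at heq'
          obtain ⟨hα, hβeq⟩ := decomp_unique heq'
            (by rw [List.dropLast_concat]; exact hwδ) hwβ' (by simp) hβ'
          rw [← hβeq] at hσβ'
          simp only [app2, ← List.append_assoc] at hσβ' ⊢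
          exact hσβ'
      · intro hS'
        have hmem' : ρ₂ ++ [w] ++ ((δ ++ [x]) ++ [y]) ∈ S.tree := by
          simp only [app2, ← List.append_assoc] at hS' ⊢
          exact hS'
        have := UT.ext (S := S) α ((δ ++ [x]) ++ [y]) hUTα (by simp)
          (by rw [List.dropLast_concat]; exact hwδ) hmem'
        have hcan : ρ ++ [x, y] = α ++ [w] ++ ((δ ++ [x]) ++ [y]) := by
          simp only [app2, heq, ← List.append_assoc]
        rw [hcan]
        exact this

/-- The uniformized strategy. -/
def uniformized (S : BuchiStrategy G v0) {w : V} {ρ₂ : List V}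
    (hmem : ρ₂ ++ [w] ∈ S.tree) : BuchiStrategy G v0 where
  tree := {μ | UT S w ρ₂ μ}
  root_mem := UT.nw _ S.root_mem (by simp)
  isPath := by
    intro ρ hρ
    induction hρ with
    | nw μ hμ _ => exact S.isPath μ hμ
    | ext α β hUT hβ hwβ hσβ ih =>
      constructor
      · rw [List.head?_append_of_ne_nil _ (by simp : α ++ [w] ≠ [])]
        exact ih.1
      · have h2 := (S.isPath _ hσβ).2
        unfold List.Chain' at h2 ih ⊢
        rw [List.isChain_append] at h2 ⊢
        refine ⟨ih.2, h2.2.1, ?_⟩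
        intro p hp q hq
        apply h2.2.2 p ?_ q hq
        rw [List.getLast?_concat] at hp ⊢
        exact hp
  prefix_closed := by
    intro ρ x hρ h
    rcases UT_cases h with ⟨hS, hno⟩ | ⟨α, β, heq, hβ, hwβ, hUTα, hσβ⟩
    · refine UT.nw _ (S.prefix_closed ρ x hρ hS) ?_
      rw [List.dropLast_concat] at hno
      exact fun hc => hno (List.dropLast_subset _ hc)
    · obtain ⟨δ, rfl⟩ : ∃ δ, β = δ ++ [x] := by
        apply List.getLast?_eq_some_iff.mp
        have h1 : (ρ ++ [x]).getLast? = some x := List.getLast?_concat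
        rw [heq, List.getLast?_append_of_ne_nil _ hβ] at h1
        exact h1
      have hρeq : ρ = α ++ [w] ++ δ := by
        rw [← List.append_assoc] at heq
        exact (List.append_inj' heq rfl).1
      cases δ with
      | nil =>
        rw [hρeq, List.append_nil]
        exact hUTα
      | cons d δ' =>
        rw [hρeq]
        refine UT.ext α (d :: δ') hUTα (by simp) ?_ ?_
        · rw [List.dropLast_concat] at hwβ
          exact fun hc => hwβ (List.dropLast_subset _ hc)
        · refine S.prefix_closed _ x (by simp) ?_
          simp only [← List.append_assoc] at hσβ ⊢
          exact hσβ
  choice0 := by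
    intro ρ x h hx
    obtain ⟨τ, hτ, hiff⟩ := UT_children S hmem h
    obtain ⟨y, hy, huniq⟩ := S.choice0 τ x hτ hx
    exact ⟨y, (hiff y).mpr hy, fun z hz => huniq z ((hiff z).mp hz)⟩
  choice1 := by
    intro ρ x h hx y hE
    obtain ⟨τ, hτ, hiff⟩ := UT_children S hmem h
    exact (hiff y).mpr (S.choice1 τ x hτ hx y hE)

/-- A node is good if every edge occurring at or below it occurs infinitely often. -/
def GoodAt (S : BuchiStrategy G v0) (σ : List V) : Prop :=
  ∀ (τ : List V) (a b : V), τ ++ [a, b] ∈ S.tree → σ <+: τ ++ [a, b] →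
    {τ' : List V | τ' ++ [a, b] ∈ S.tree}.Infinite

private lemma absorbs_uniformized {S : BuchiStrategy G v0} {w : V} {ρ₂ : List V}
    (hmem : ρ₂ ++ [w] ∈ S.tree) (hgood : GoodAt S (ρ₂ ++ [w])) :
    Absorbs (uniformized S hmem) S := by
  rintro ⟨a, b⟩
  by_cases hI : {τ' : List V | τ' ++ [a, b] ∈ S.tree}.Infinite
  · have : edgeCount S (a, b) = ⊤ := hI.encard_eq
    rw [this]; exact le_top
  · apply Set.encard_mono
    intro ρ hρ
    have hρ' : UT S w ρ₂ (ρ ++ [a, b]) := hρ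
    rcases UT_cases hρ' with ⟨hS, _⟩ | ⟨α, β, heq, hβ, hwβ, _, hσβ⟩
    · exact hS
    · exfalso
      apply hI
      obtain ⟨δ, rfl⟩ : ∃ δ, β = δ ++ [b] := by
        apply List.getLast?_eq_some_iff.mp
        have h1 : (ρ ++ [a, b]).getLast? = some b := by
          rw [app2]; exact List.getLast?_concat
        rw [heq, List.getLast?_append_of_ne_nil _ hβ] at h1
        exact h1
      have hρab : ρ ++ [a] = α ++ [w] ++ δ := by
        rw [app2, ← List.append_assoc] at heq
        exact (List.append_inj' heq rfl).1
      cases δ with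
      | nil =>
        have haw : a = w := by
          rw [List.append_nil] at hρab
          have := congrArg List.getLast? hρab
          rw [List.getLast?_concat, List.getLast?_concat] at this
          injection this
        subst haw
        refine hgood ρ₂ a b ?_ ⟨[b], (app2 ρ₂ a b).symm⟩
        rw [app2]
        simp only [List.nil_append] at hσβ
        exact hσβ
      | cons d δ' =>
        obtain ⟨δ₁, hδ₁⟩ : ∃ δ₁, d :: δ' = δ₁ ++ [a] := by
          apply List.getLast?_eq_some_iff.mp
          have := congrArg List.getLast? hρab
          rw [List.getLast?_concat, List.getLast?_append_of_ne_nil _ (by simp)] at this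
          exact this.symm
        refine hgood (ρ₂ ++ [w] ++ δ₁) a b ?_ ⟨δ₁ ++ [a, b], by simp [List.append_assoc]⟩
        have hh : ρ₂ ++ [w] ++ (d :: δ' ++ [b]) ∈ S.tree := hσβ
        rw [hδ₁] at hh
        simp only [app2, ← List.append_assoc] at hh ⊢
        exact hh

private lemma UT_w_child {S : BuchiStrategy G v0} {w : V} {ρ₂ : List V}
    {ρ : List V} {u : V} (h : UT S w ρ₂ (ρ ++ [w, u])) : ρ₂ ++ [w, u] ∈ S.tree := by
  rcases UT_cases h with ⟨_, hno⟩ | ⟨α, β, heq, hβ, hwβ, _, hσβ⟩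
  · exfalso; apply hno; rw [app2, List.dropLast_concat]; simp
  · rw [app2] at heq
    obtain ⟨hα, hβeq⟩ := decomp_unique heq (by simp) hwβ (by simp) hβ
    rw [← hβeq] at hσβ
    rw [app2]
    exact hσβ

/-- Existence of a good occurrence of `w`, given that `w` occurs infinitely often. -/
private lemma exists_good [Fintype V] (S : BuchiStrategy G v0) (w : V)
    (hinf : {ρ : List V | ρ ++ [w] ∈ S.tree}.Infinite) :
    ∃ ρ₂, ρ₂ ++ [w] ∈ S.tree ∧ GoodAt S (ρ₂ ++ [w]) := by
  classical
  set B : Set (List V) :=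
    {μ | ∃ τ a b, μ = τ ++ [a, b] ∧ μ ∈ S.tree ∧ {τ' | τ' ++ [a, b] ∈ S.tree}.Finite}
    with hBdef
  have hB : B.Finite := by
    have hsub : B ⊆ ⋃ (e : V × V),
        ((· ++ [e.1, e.2]) ''
          {τ' | τ' ++ [e.1, e.2] ∈ S.tree ∧ {τ'' | τ'' ++ [e.1, e.2] ∈ S.tree}.Finite}) := by
      rintro μ ⟨τ, a, b, rfl, hμ, hfin⟩
      exact Set.mem_iUnion.mpr ⟨(a, b), ⟨τ, ⟨hμ, hfin⟩, rfl⟩⟩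
    refine Set.Finite.subset (Set.finite_iUnion fun e => ?_) hsub
    by_cases hf : {τ'' | τ'' ++ [e.1, e.2] ∈ S.tree}.Finite
    · exact (hf.subset fun τ' hτ' => hτ'.1).image _
    · exact (Set.finite_empty.subset fun τ' hτ' => absurd hτ'.2 hf).image _
  have hP : {l : List V | ∃ μ ∈ B, l <+: μ}.Finite := by
    have heq : {l : List V | ∃ μ ∈ B, l <+: μ} = ⋃ μ ∈ B, {l | l <+: μ} := by
      ext l; simp
    rw [heq]
    refine hB.biUnion fun μ _ => ?_
    refine Set.Finite.subset
      (Set.finite_range fun n : Fin (μ.length + 1) => μ.take n) ?_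
    intro l hl
    exact ⟨⟨l.length, Nat.lt_succ_of_le hl.length_le⟩,
      (List.prefix_iff_eq_take.mp hl).symm⟩
  have hO : ((· ++ [w]) '' {ρ | ρ ++ [w] ∈ S.tree}).Infinite :=
    hinf.image ((List.append_left_injective [w]).injOn)
  obtain ⟨σ, hσO, hσP⟩ := (hO.diff hP).nonempty
  obtain ⟨ρ₂, hρ₂, rfl⟩ := hσO
  refine ⟨ρ₂, hρ₂, ?_⟩
  intro τ a b hτ hpre
  by_contra hni
  exact hσP ⟨τ ++ [a, b], ⟨τ, a, b, rfl, hτ, Set.not_infinite.mp hni⟩, hpre⟩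

end AbsDomAux

open BuchiStrategy in
/-- If an absorption-dominant winning strategy `S` from `v` contains infinitely
many occurrences of a Player 0 position `w`, then `S` plays positionally
from `w`. -/
theorem absorption_dominant_plays_positionally_at_infinite {V : Type*} [Fintype V]
    {G : BuchiGame V} {v : V} (S : BuchiStrategy G v)
    (hwin : S.Winning) (hdom : S.AbsorptionDominant)
    (w : V) (hw : w ∈ G.V0)
    (hinf : {ρ : List V | ρ ++ [w] ∈ S.tree}.Infinite) :
    ∀ (ρ ρ' : List V) (u u' : V),
      ρ ++ [w, u] ∈ S.tree → ρ' ++ [w, u'] ∈ S.tree → u = u' := by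
  classical
  obtain ⟨ρ₂, hmem, hgood⟩ := exists_good S w hinf
  have key : ∀ (σ : List V) (u : V), σ ++ [w, u] ∈ S.tree → ρ₂ ++ [w, u] ∈ S.tree := by
    intro σ u hu
    by_contra hne
    apply hdom (uniformized S hmem)
    refine ⟨absorbs_uniformized hmem hgood, ⟨(w, u), ?_⟩⟩
    have h0 : edgeCount (uniformized S hmem) (w, u) = 0 := by
      rw [edgeCount, Set.encard_eq_zero]
      ext σ'
      simp only [Set.mem_setOf_eq, Set.mem_empty_iff_false, iff_false]
      intro hσ'
      exact hne (UT_w_child hσ')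
    rw [h0]
    exact Set.encard_pos.mpr ⟨σ, hu⟩
  intro ρ ρ' u u' h1 h2
  obtain ⟨y, hy, huniq⟩ := S.choice0 ρ₂ w hmem hw
  rw [huniq u (key ρ u h1), huniq u' (key ρ' u' h2)]
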